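/- Let α, γ, k, m, r be nonnegative integers with γ ≤ α and n ≥ kγ. Then the implicit formula _{eH}P_{n-kγ,β}^{(α-γ,m,r)}(x,y,z;k,a,b) = ((n-kγ)! γ!/n!) (a^b/2^{1-k})^γ Σ_{l=0}^{n} binom(n,l) _{eH}P_{n-l,β}^{(α,m,r)}(x,y,z;k,a,b) S(l, γ; (β/a)^b) holds, where S(l,γ;λ) are the λ-Stirling numbers of the second kind. -/

import Mathlib

open scoped BigOperators

/-- The exponential series `e^{ct}` in `ℂ[[t]]`. -/
noncomputable def expC (c : ℂ) : PowerSeries ℂ :=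
  PowerSeries.mk fun n => c ^ n / n.factorial

/-- The series `e^{y t^m} = ∑_k y^k t^{mk}/k!` in `ℂ[[t]]`. -/
noncomputable def expMonC (y : ℂ) (m : ℕ) : PowerSeries ℂ :=
  PowerSeries.mk fun n => if m ∣ n then y ^ (n / m) / (n / m).factorial else 0

lemma cpow_div_ofReal' (a : ℝ) (ha : 0 < a) (b : ℝ) (β : ℂ) :
    ((a ^ b : ℝ) : ℂ) * (β / (a : ℂ)) ^ (b : ℂ) = β ^ (b : ℂ) := by
  rw [Complex.cpow_ofReal, Complex.cpow_ofReal]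
  have harg : Complex.arg (β / (a:ℂ)) = Complex.arg β := by
    rw [div_eq_mul_inv, ← Complex.ofReal_inv]
    exact Complex.arg_mul_real (inv_pos.2 ha) β
  have habs : ‖β / (a:ℂ)‖ = ‖β‖ / a := by
    rw [norm_div, Complex.norm_real, Real.norm_of_nonneg ha.le]
  have hm : a * (‖β‖ / a) = ‖β‖ := by field_simp
  rw [harg, habs, ← mul_assoc, ← Complex.ofReal_mul,
    ← Real.mul_rpow ha.le (div_nonneg (norm_nonneg β) ha.le), hm]

/-- Implicit formula relating the unified Apostol type-truncated
exponential-Gould-Hopper polynomials of orders `α` and `α - γ` via the λ-Stirling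
numbers of the second kind `St l = S(l,γ;(β/a)^b)`.  Generating functions are
stated with denominators cleared. -/
theorem apostol_tegh_implicit_formula
    (a b : ℝ) (ha : 0 < a) (hb : 0 < b) (β : ℂ) (hβ : β ^ (b : ℂ) ≠ ((a ^ b : ℝ) : ℂ))
    (x y z : ℝ) (k α γ m r : ℕ) (hγ : γ ≤ α)
    (P Pg St : ℕ → ℂ)
    (hP : (PowerSeries.C (R := ℂ) ((((2 : ℝ) ^ ((1 : ℝ) - (k : ℝ)) : ℝ) : ℂ)) *
          PowerSeries.X ^ k) ^ α * (expC (x : ℂ) * expMonC (y : ℂ) m) =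
        (PowerSeries.C (R := ℂ) (β ^ (b : ℂ)) * expC 1 - PowerSeries.C (R := ℂ) ((a ^ b : ℝ) : ℂ)) ^ α *
          ((1 - PowerSeries.C (R := ℂ) (z : ℂ) * PowerSeries.X ^ r) *
            PowerSeries.mk (fun n => P n / n.factorial)))
    (hPg : (PowerSeries.C (R := ℂ) ((((2 : ℝ) ^ ((1 : ℝ) - (k : ℝ)) : ℝ) : ℂ)) *
          PowerSeries.X ^ k) ^ (α - γ) * (expC (x : ℂ) * expMonC (y : ℂ) m) =
        (PowerSeries.C (R := ℂ) (β ^ (b : ℂ)) * expC 1 -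
            PowerSeries.C (R := ℂ) ((a ^ b : ℝ) : ℂ)) ^ (α - γ) *
          ((1 - PowerSeries.C (R := ℂ) (z : ℂ) * PowerSeries.X ^ r) *
            PowerSeries.mk (fun n => Pg n / n.factorial)))
    (hSt : (PowerSeries.C (R := ℂ) ((β / (a : ℂ)) ^ (b : ℂ)) * expC 1 - 1) ^ γ =
        PowerSeries.C (R := ℂ) (γ.factorial : ℂ) * PowerSeries.mk (fun n => St n / n.factorial))
    (n : ℕ) (hn : k * γ ≤ n) :
    Pg (n - k * γ) =
      (((n - k * γ).factorial : ℂ) * (γ.factorial : ℂ) / (n.factorial : ℂ)) *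
        (((a ^ b : ℝ) : ℂ) / (((2 : ℝ) ^ ((1 : ℝ) - (k : ℝ)) : ℝ) : ℂ)) ^ γ *
        ∑ l ∈ Finset.range (n + 1), (n.choose l : ℂ) * P (n - l) * St l := by
  classical
  obtain ⟨δ, rfl⟩ := Nat.exists_eq_add_of_le hγ
  rw [Nat.add_sub_cancel_left] at hPg
  set w : ℂ := (((2 : ℝ) ^ ((1 : ℝ) - (k : ℝ)) : ℝ) : ℂ) with hwdef
  set ab : ℂ := ((a ^ b : ℝ) : ℂ) with habdef
  set A : PowerSeries ℂ := PowerSeries.C (R := ℂ) w * PowerSeries.X ^ k with hA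
  set E : PowerSeries ℂ := expC (x : ℂ) * expMonC (y : ℂ) m with hE
  set B : PowerSeries ℂ := PowerSeries.C (R := ℂ) (β ^ (b : ℂ)) * expC 1 - PowerSeries.C (R := ℂ) ab with hB
  set D : PowerSeries ℂ := 1 - PowerSeries.C (R := ℂ) (z : ℂ) * PowerSeries.X ^ r with hD
  set F : PowerSeries ℂ := PowerSeries.mk (fun n => P n / n.factorial) with hF
  set Fg : PowerSeries ℂ := PowerSeries.mk (fun n => Pg n / n.factorial) with hFg
  set G : PowerSeries ℂ := PowerSeries.mk (fun n => St n / n.factorial) with hG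
  -- nonzero facts
  have hwne : w ≠ 0 := by
    simp only [hwdef, ne_eq, Complex.ofReal_eq_zero]
    exact (Real.rpow_pos_of_pos two_pos _).ne'
  have hAne : A ≠ 0 :=
    mul_ne_zero (by simpa using hwne) (pow_ne_zero _ PowerSeries.X_ne_zero)
  have hEne : E ≠ 0 := by
    intro h
    have h0 := congrArg (PowerSeries.constantCoeff (R := ℂ)) h
    rw [hE, map_mul] at h0
    simp [expC, expMonC] at h0
  have hBDF : B ^ (γ + δ) * (D * F) ≠ 0 := by
    rw [← hP]; exact mul_ne_zero (pow_ne_zero _ hAne) hEne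
  have hBc : PowerSeries.constantCoeff (R := ℂ) B = β ^ (b : ℂ) - ab := by
    rw [hB, map_sub, map_mul]; simp [expC]
  have hBne : B ≠ 0 := fun h =>
    hβ (sub_eq_zero.mp (by rw [← hBc, h, map_zero]))
  have hDne : D ≠ 0 := fun h => hBDF (by rw [h, zero_mul, mul_zero])
  have hne : B ^ (γ + δ) * D ≠ 0 := mul_ne_zero (pow_ne_zero _ hBne) hDne
  -- B^γ in terms of G
  have hBfact : B = PowerSeries.C (R := ℂ) ab *
      (PowerSeries.C (R := ℂ) ((β / (a : ℂ)) ^ (b : ℂ)) * expC 1 - 1) := by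
    rw [mul_sub, mul_one, ← mul_assoc, ← map_mul, cpow_div_ofReal' a ha b β, hB]
  have hBγ : B ^ γ = PowerSeries.C (R := ℂ) (ab ^ γ * (γ.factorial : ℂ)) * G := by
    rw [hBfact, mul_pow, hSt, map_mul, map_pow]
    ring
  -- main identity
  have hmain : (B ^ (γ + δ) * D) * (A ^ γ * Fg) =
      (B ^ (γ + δ) * D) * (PowerSeries.C (R := ℂ) (ab ^ γ * (γ.factorial : ℂ)) * (G * F)) := by
    linear_combination (-(B ^ γ * A ^ γ)) * hPg + B ^ γ * hP +
      (B ^ (γ + δ) * D * F) * hBγ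
  have hcancel : A ^ γ * Fg = PowerSeries.C (R := ℂ) (ab ^ γ * (γ.factorial : ℂ)) * (G * F) :=
    mul_left_cancel₀ hne hmain
  -- take coefficient n
  have hc := congrArg (PowerSeries.coeff (R := ℂ) n) hcancel
  rw [hA, mul_pow, ← map_pow, ← pow_mul, mul_assoc, PowerSeries.coeff_C_mul,
    PowerSeries.coeff_X_pow_mul', if_pos hn, PowerSeries.coeff_C_mul,
    PowerSeries.coeff_mul, Finset.Nat.sum_antidiagonal_eq_sum_range_succ_mk] at hc
  simp only [hFg, hG, hF, PowerSeries.coeff_mk] at hc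
  -- hc : w ^ γ * (Pg (n - k*γ) / _!) = (ab^γ * γ!) * ∑ ...
  have hγne : ((γ.factorial : ℂ)) ≠ 0 := Nat.cast_ne_zero.2 γ.factorial_ne_zero
  have hnne : ((n.factorial : ℂ)) ≠ 0 := Nat.cast_ne_zero.2 n.factorial_ne_zero
  have hkne : (((n - k * γ).factorial : ℂ)) ≠ 0 := Nat.cast_ne_zero.2 (n - k * γ).factorial_ne_zero
  have hwγ : w ^ γ ≠ 0 := pow_ne_zero _ hwne
  have hsum : ∑ l ∈ Finset.range (n + 1), (n.choose l : ℂ) * P (n - l) * St l =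
      (n.factorial : ℂ) *
        ∑ l ∈ Finset.range (n + 1), St l / l.factorial * (P (n - l) / (n - l).factorial) := by
    rw [Finset.mul_sum]
    refine Finset.sum_congr rfl fun l hl => ?_
    have hln : l ≤ n := Nat.lt_succ_iff.mp (Finset.mem_range.mp hl)
    rw [Nat.cast_choose ℂ hln]
    have h1 : ((l.factorial : ℂ)) ≠ 0 := Nat.cast_ne_zero.2 l.factorial_ne_zero
    have h2 : (((n - l).factorial : ℂ)) ≠ 0 := Nat.cast_ne_zero.2 (n - l).factorial_ne_zero
    field_simp
  rw [hsum, div_pow]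
  field_simp at hc ⊢
  linear_combination hc
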